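/- Upper bound on winning probability: in the K-stage coupon lottery with M participants whose coupon counts all lie in [r_min, r_max] with 0 < r_min ≤ r_max, the probability that agent 1 wins satisfies p_win ≤ 1 − (M−K)/M · (r_min/r_max)^K, regardless of the action distribution of the opponents. -/

import Mathlib

/-- Probability that an agent with coupon count `r` fails to be among the first `K`
winners of a Plackett-Luce lottery against opponents with coupon counts `opp`. -/
noncomputable def lossProb (r : ℝ) : ℕ → List ℝ → ℝ
  | 0, _ => 1
  | K + 1, opp =>
      ∑ i ∈ Finset.range opp.length,
        (opp.getD i 0 / (r + opp.sum)) * lossProb r K (opp.eraseIdx i)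

lemma sum_getD_range (l : List ℝ) :
    ∑ i ∈ Finset.range l.length, l.getD i 0 = l.sum := by
  induction l with
  | nil => simp
  | cons a t ih =>
      rw [List.length_cons, Finset.sum_range_succ']
      simp only [List.getD_cons_succ, List.getD_cons_zero, List.sum_cons, ih]
      ring

lemma lossProb_lower (rmin rmax r : ℝ) (h0 : 0 < rmin) (hmm : rmin ≤ rmax)
    (hr : r ∈ Set.Icc rmin rmax) :
    ∀ (K : ℕ) (opp : List ℝ), K ≤ opp.length →
      (∀ c ∈ opp, c ∈ Set.Icc rmin rmax) →
      ((opp.length + 1 - K : ℝ) / (opp.length + 1)) * (rmin / rmax) ^ K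
        ≤ lossProb r K opp := by
  intro K
  induction K with
  | zero =>
      intro opp _ _
      have h : ((opp.length : ℝ) + 1) ≠ 0 := by positivity
      simp [lossProb, div_self h]
  | succ K ih =>
      intro opp hK hopp
      have hrmax : 0 < rmax := lt_of_lt_of_le h0 hmm
      set n := opp.length with hn
      have hn1 : 1 ≤ n := le_trans (Nat.succ_le_succ (Nat.zero_le K)) hK
      have hn1' : (1 : ℝ) ≤ (n : ℝ) := by exact_mod_cast hn1
      set q := rmin / rmax with hq
      have hq0 : 0 ≤ q := by positivity
      have hq1 : q ≤ 1 := div_le_one_of_le₀ hmm (le_of_lt hrmax)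
      have hgetD : ∀ i ∈ Finset.range n, rmin ≤ opp.getD i 0 := by
        intro i hi
        rw [Finset.mem_range] at hi
        rw [List.getD_eq_getElem _ _ hi]
        exact (hopp _ (List.getElem_mem hi)).1
      have hS : (n : ℝ) * rmin ≤ opp.sum := by
        calc (n : ℝ) * rmin = ∑ _i ∈ Finset.range n, rmin := by
              rw [Finset.sum_const, Finset.card_range, nsmul_eq_mul]
          _ ≤ ∑ i ∈ Finset.range n, opp.getD i 0 := Finset.sum_le_sum hgetD
          _ = opp.sum := sum_getD_range opp
      have hSpos : 0 < opp.sum := lt_of_lt_of_le (by nlinarith) hS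
      have hrpos : 0 < r := lt_of_lt_of_le h0 hr.1
      have hden : 0 < r + opp.sum := by linarith
      have hqr : q * r ≤ rmin := by
        calc q * r ≤ q * rmax := mul_le_mul_of_nonneg_left hr.2 hq0
          _ = rmin := by rw [hq]; field_simp
      -- key inequality
      have key : q * ((r + opp.sum) * n) ≤ opp.sum * (n + 1) := by
        nlinarith [mul_le_mul_of_nonneg_left hqr (le_of_lt (lt_of_lt_of_le zero_lt_one hn1')),
          mul_le_mul_of_nonneg_right hq1 (le_of_lt (mul_pos (lt_of_lt_of_le zero_lt_one hn1') hSpos))]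
      have h1 : q / ((n : ℝ) + 1) ≤ opp.sum / ((r + opp.sum) * n) := by
        rw [div_le_div_iff₀ (by positivity) (by positivity)]
        linarith [key]
      -- per-term bound via IH
      have hterm : ∀ i ∈ Finset.range n,
          (opp.getD i 0 / (r + opp.sum)) * (((n : ℝ) - K) / n * q ^ K)
            ≤ (opp.getD i 0 / (r + opp.sum)) * lossProb r K (opp.eraseIdx i) := by
        intro i hi
        rw [Finset.mem_range] at hi
        have hlen' : (opp.eraseIdx i).length = n - 1 := by
          rw [List.length_eraseIdx_of_lt hi]
        have hK' : K ≤ (opp.eraseIdx i).length := by omega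
        have hmem : ∀ c ∈ opp.eraseIdx i, c ∈ Set.Icc rmin rmax := fun c hc =>
          hopp c ((List.eraseIdx_sublist opp i).subset hc)
        have := ih (opp.eraseIdx i) hK' hmem
        have hcast : ((opp.eraseIdx i).length : ℝ) = (n : ℝ) - 1 := by
          rw [hlen']; push_cast [Nat.cast_sub hn1]; ring
        rw [hcast] at this
        have hrw : ((n : ℝ) - 1 + 1 - K) / ((n : ℝ) - 1 + 1) = ((n : ℝ) - K) / n := by
          norm_num
        rw [hrw] at this
        have h0i : 0 ≤ opp.getD i 0 :=
          le_trans h0.le (hgetD i (Finset.mem_range.mpr hi))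
        exact mul_le_mul_of_nonneg_left this (div_nonneg h0i hden.le)
      have hsum : ∑ i ∈ Finset.range n,
            (opp.getD i 0 / (r + opp.sum)) * (((n : ℝ) - K) / n * q ^ K)
          = (opp.sum / (r + opp.sum)) * (((n : ℝ) - K) / n * q ^ K) := by
        rw [← Finset.sum_mul, ← Finset.sum_div, sum_getD_range]
      have hKn : (K : ℝ) ≤ (n : ℝ) - 1 := by
        have : K + 1 ≤ n := hK
        have : ((K : ℝ) + 1) ≤ (n : ℝ) := by exact_mod_cast this
        linarith
      have hA : 0 ≤ (n : ℝ) - K := by linarith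
      calc ((n : ℝ) + 1 - (K + 1 : ℕ)) / ((n : ℝ) + 1) * q ^ (K + 1)
          = (((n : ℝ) - K) * q ^ K) * (q / ((n : ℝ) + 1)) := by
            push_cast; ring
        _ ≤ (((n : ℝ) - K) * q ^ K) * (opp.sum / ((r + opp.sum) * n)) :=
            mul_le_mul_of_nonneg_left h1 (mul_nonneg hA (by positivity))
        _ = (opp.sum / (r + opp.sum)) * (((n : ℝ) - K) / n * q ^ K) := by
            field_simp
        _ = ∑ i ∈ Finset.range n,
              (opp.getD i 0 / (r + opp.sum)) * (((n : ℝ) - K) / n * q ^ K) := hsum.symm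
        _ ≤ ∑ i ∈ Finset.range n,
              (opp.getD i 0 / (r + opp.sum)) * lossProb r K (opp.eraseIdx i) :=
            Finset.sum_le_sum hterm
        _ = lossProb r (K + 1) opp := rfl

/-- Upper bound on the winning probability: if all `M` coupon counts lie in
`[rmin, rmax]` with `0 < rmin ≤ rmax`, then agent 1's probability of being among the
first `K` winners (`K < M`) is at most `1 - (M-K)/M * (rmin/rmax)^K`. -/
theorem winProb_upper_bound (M K : ℕ) (hK : K < M) (rmin rmax r : ℝ)
    (h0 : 0 < rmin) (hmm : rmin ≤ rmax) (opp : List ℝ) (hlen : opp.length = M - 1)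
    (hr : r ∈ Set.Icc rmin rmax) (hopp : ∀ c ∈ opp, c ∈ Set.Icc rmin rmax) :
    1 - lossProb r K opp ≤ 1 - ((M - K : ℝ) / M) * (rmin / rmax) ^ K := by
  have hM1 : 1 ≤ M := Nat.one_le_of_lt hK
  have hKlen : K ≤ opp.length := by omega
  have h := lossProb_lower rmin rmax r h0 hmm hr K opp hKlen hopp
  have hcast : ((opp.length : ℝ) + 1) = (M : ℝ) := by
    rw [hlen]; push_cast [Nat.cast_sub hM1]; ring
  rw [hcast] at h
  linarith
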